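/- The function V(x₁,x₂,x₃) = (x₁ + 2x₂ + x₃)² + 2x₃² + 2x₃·sin(x₂) - 4·cos(x₂) + 4 satisfies V(0,0,0) = 0 and is positive definite on a neighborhood of the origin; in particular V(x₁,x₂,x₃) > 0 for all (x₁,x₂,x₃) ≠ 0 in the set {|x₂| < π/10, |x₃| < 15/π}. -/
import Mathlib


open Real

/-- The value function `V = (x₁+2x₂+x₃)² + 2x₃² + 2x₃ sin x₂ - 4cos x₂ + 4`
satisfies `V(0,0,0) = 0` and is positive at every nonzero point of the region
`{|x₂| < π/10, |x₃| < 15/π}`. -/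
theorem stmt_14 (V : ℝ → ℝ → ℝ → ℝ)
    (hV : ∀ x₁ x₂ x₃, V x₁ x₂ x₃ =
      (x₁ + 2 * x₂ + x₃) ^ 2 + 2 * x₃ ^ 2 + 2 * x₃ * Real.sin x₂
        - 4 * Real.cos x₂ + 4) :
    V 0 0 0 = 0 ∧
    ∀ x₁ x₂ x₃ : ℝ, |x₂| < Real.pi / 10 → |x₃| < 15 / Real.pi →
      (x₁, x₂, x₃) ≠ (0, 0, 0) → 0 < V x₁ x₂ x₃ := by
  constructor
  · simp [hV]
  · intro x₁ x₂ x₃ h2 _ hne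
    rw [hV]
    by_cases hx2 : x₂ = 0
    · subst hx2
      simp only [Real.sin_zero, Real.cos_zero]
      by_cases hx3 : x₃ = 0
      · subst hx3
        have hx1 : x₁ ≠ 0 := by simpa using hne
        have : x₁ ^ 2 > 0 := by positivity
        nlinarith
      · have : x₃ ^ 2 > 0 := by positivity
        nlinarith [sq_nonneg (x₁ + x₃)]
    · -- sin(x₂/2) ≠ 0
      have hpi : (0:ℝ) < Real.pi := Real.pi_pos
      have hs : Real.sin (x₂ / 2) ≠ 0 := by
        intro h
        rcases Real.sin_eq_zero_iff.mp h with ⟨n, hn⟩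
        have hb : |x₂ / 2| < Real.pi / 20 := by
          rw [abs_div]
          rw [abs_of_pos (by norm_num : (0:ℝ) < 2)]
          linarith [h2, abs_nonneg x₂]
        have hn' : |(n:ℝ)| * Real.pi < Real.pi / 20 := by
          have : |(n:ℝ) * Real.pi| = |(n:ℝ)| * Real.pi := by
            rw [abs_mul, abs_of_pos hpi]
          rw [← this, hn]; exact hb
        have : |(n:ℝ)| < 1 := by
          nlinarith [abs_nonneg (n:ℝ)]
        have : n = 0 := by
          have := abs_lt.mp this
          have h1 : (n:ℝ) < 1 := this.2
          have h2' : (-1:ℝ) < n := this.1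
          have hn1 : n < 1 := by exact_mod_cast h1
          have hn2 : -1 < n := by exact_mod_cast h2'
          omega
        subst this
        simp at hn
        exact hx2 (by linarith)
      have hs2 : Real.sin (x₂ / 2) ^ 2 > 0 := by positivity
      have hc : Real.cos (x₂ / 2) ^ 2 ≤ 1 := by
        nlinarith [Real.sin_sq_add_cos_sq (x₂ / 2)]
      have hsin : Real.sin x₂ = 2 * Real.sin (x₂ / 2) * Real.cos (x₂ / 2) := by
        rw [← Real.sin_two_mul]; ring_nf
      have hcos : Real.cos x₂ = 1 - 2 * Real.sin (x₂ / 2) ^ 2 := by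
        have h := Real.cos_two_mul (x₂ / 2)
        have h' : 2 * (x₂ / 2) = x₂ := by ring
        rw [h'] at h
        nlinarith [Real.sin_sq_add_cos_sq (x₂ / 2)]
      rw [hsin, hcos]
      nlinarith [sq_nonneg (x₁ + 2 * x₂ + x₃), sq_nonneg (x₃ + Real.sin (x₂/2) * Real.cos (x₂/2)), sq_nonneg (Real.sin (x₂/2) * Real.cos (x₂/2)), mul_nonneg hs2.le (sq_nonneg (Real.cos (x₂/2)))]
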